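/- The partial order on Kostant pictures defined by 'P ≥ Q if Q can be obtained from P by a finite sequence of fusions' is well-defined (antisymmetric): no nonempty sequence of nontrivial fusions applied to P can return P. -/
import Mathlib


/-- `Q` is obtained from `P` by a single (nontrivial) fusion: two overlapping loops
`A, B` (with `A.1 < B.1 ≤ A.2 < B.2`) are replaced by their union `(A.1, B.2)`
and intersection `(B.1, A.2)` (possibly a one-point zero loop). -/
def IsFusion (P Q : Multiset (ℕ × ℕ)) : Prop :=
  ∃ A B : ℕ × ℕ, A.1 < B.1 ∧ B.1 ≤ A.2 ∧ A.2 < B.2 ∧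
    A ∈ P ∧ B ∈ P.erase A ∧
    Q = (A.1, B.2) ::ₘ (B.1, A.2) ::ₘ ((P.erase A).erase B)

/-- The statistic: sum of squared lengths of loops. -/
def fusStat (P : Multiset (ℕ × ℕ)) : ℕ :=
  (P.map (fun p => (p.2 - p.1) ^ 2)).sum

lemma fusStat_lt {P Q : Multiset (ℕ × ℕ)} (h : IsFusion P Q) :
    fusStat P < fusStat Q := by
  obtain ⟨A, B, h1, h2, h3, hA, hB, rfl⟩ := h
  have hP : P = A ::ₘ B ::ₘ ((P.erase A).erase B) := by
    rw [Multiset.cons_erase hB, Multiset.cons_erase hA]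
  rw [hP]
  simp only [fusStat, Multiset.erase_cons_head, Multiset.map_cons, Multiset.sum_cons]
  have key : (A.2 - A.1) ^ 2 + (B.2 - B.1) ^ 2 <
      (B.2 - A.1) ^ 2 + (A.2 - B.1) ^ 2 := by
    zify [h1.le, h3.le, h2, (h1.trans_le h2).le, (h1.trans (h2.trans_lt h3)).le, (h2.trans_lt h3).le]
    nlinarith [mul_pos (sub_pos.mpr (show (A.1 : ℤ) < B.1 by exact_mod_cast h1))
      (sub_pos.mpr (show (A.2 : ℤ) < B.2 by exact_mod_cast h3))]
  omega

theorem stmt_3 (P : Multiset (ℕ × ℕ)) : ¬ Relation.TransGen IsFusion P P := by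
  intro h
  have : fusStat P < fusStat P := by
    have mono : ∀ {X Y : Multiset (ℕ × ℕ)}, Relation.TransGen IsFusion X Y →
        fusStat X < fusStat Y := by
      intro X Y hXY
      induction hXY with
      | single h => exact fusStat_lt h
      | tail _ h ih => exact ih.trans (fusStat_lt h)
    exact mono h
  exact lt_irrefl _ this
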